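/- Let G ⊆ ℝ^M be compact convex and R_1, ..., R_K : G → ℝ continuous. Suppose p' ∈ G satisfies R_1(p') = ⋯ = R_B(p') and R_1(p') < R_j(p') for all j > B, and suppose p' maximizes R_1 over the set { p ∈ G : R_1(p) = ⋯ = R_B(p) }. If additionally every maximizer p* of min_i R_i over G has its bottleneck set equal to {1,...,B'} for some B' (i.e., {i : R_i(p*) = min_j R_j(p*)} = {1,...,B'}) and p* maximizes R_1 over the corresponding equality set, then min_i R_i(p') = max_{p∈G} min_i R_i(p). -/
import Mathlib

/-- overall correctness of Algorithm 2 — if p' satisfies the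
conditions for the first B for which they are satisfiable, and every maximin
optimizer has bottleneck set an initial segment {1,...,B'} and globally
maximizes R₁ over its equality set, then p' attains the maximin optimum. -/
theorem stmt_18 {M : ℕ}
    (G : Set (EuclideanSpace ℝ (Fin M))) (hGne : G.Nonempty)
    (hGcomp : IsCompact G) (hGconv : Convex ℝ G)
    (K : ℕ) (hK : 1 ≤ K)
    (R : ℕ → EuclideanSpace ℝ (Fin M) → ℝ) (hR : ∀ i, ContinuousOn (R i) G)
    (minR : EuclideanSpace ℝ (Fin M) → ℝ)
    (hminR : ∀ p, minR p =
      (Finset.Icc 1 K).inf' (Finset.nonempty_Icc.mpr hK) (fun i => R i p))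
    (B : ℕ) (hB1 : 1 ≤ B) (hBK : B ≤ K)
    (p' : EuclideanSpace ℝ (Fin M)) (hp'G : p' ∈ G)
    (heq : ∀ i, 1 ≤ i → i ≤ B → R i p' = R 1 p')
    (hlt : ∀ j, B < j → j ≤ K → R 1 p' < R j p')
    (hmax : ∀ p ∈ G, (∀ i, 1 ≤ i → i ≤ B → R i p = R 1 p) → R 1 p ≤ R 1 p')
    (hfirst : ∀ B₀, 1 ≤ B₀ → B₀ < B →
      ¬ ∃ q ∈ G, (∀ i, 1 ≤ i → i ≤ B₀ → R i q = R 1 q) ∧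
        (∀ j, B₀ < j → j ≤ K → R 1 q < R j q) ∧
        (∀ p ∈ G, (∀ i, 1 ≤ i → i ≤ B₀ → R i p = R 1 p) → R 1 p ≤ R 1 q))
    (hstruct : ∀ pstar ∈ G, (∀ p ∈ G, minR p ≤ minR pstar) →
      ∃ B', 1 ≤ B' ∧ B' ≤ K ∧
        ({i | 1 ≤ i ∧ i ≤ K ∧ R i pstar = minR pstar} =
          {i | 1 ≤ i ∧ i ≤ B'}) ∧
        (∀ p ∈ G, (∀ i, 1 ≤ i → i ≤ B' → R i p = R 1 p) → R 1 p ≤ R 1 pstar)) :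
    ∀ p ∈ G, minR p ≤ minR p' := by
  have h1K : (1 : ℕ) ∈ Finset.Icc 1 K := Finset.mem_Icc.mpr ⟨le_refl 1, hK⟩
  -- continuity of minR on G
  have hminRc : ContinuousOn minR G := by
    intro x hx
    have : ContinuousWithinAt
        (fun p => (Finset.Icc 1 K).inf' (Finset.nonempty_Icc.mpr hK)
          (fun i => R i p)) G x := by
      exact ContinuousWithinAt.finset_inf'_apply (Finset.nonempty_Icc.mpr hK)
        (fun i _ => hR i x hx)
    simpa only [← funext hminR] using this
  obtain ⟨ps, hpsG, hps⟩ := hGcomp.exists_isMaxOn hGne hminRc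
  have hpsmax : ∀ p ∈ G, minR p ≤ minR ps := fun p hp => hps hp
  obtain ⟨B', hB'1, hB'K, hset, hmax'⟩ := hstruct ps hpsG hpsmax
  -- 1 is in the bottleneck set
  have h1mem : R 1 ps = minR ps := by
    have : (1 : ℕ) ∈ {i | 1 ≤ i ∧ i ≤ B'} := ⟨le_refl 1, hB'1⟩
    rw [← hset] at this
    exact this.2.2
  have hinf_le : ∀ p, ∀ j, 1 ≤ j → j ≤ K → minR p ≤ R j p := by
    intro p j hj1 hjK
    rw [hminR p]
    exact Finset.inf'_le _ (Finset.mem_Icc.mpr ⟨hj1, hjK⟩)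
  -- minR p' = R 1 p'
  have hminp' : minR p' = R 1 p' := by
    apply le_antisymm (hinf_le p' 1 (le_refl 1) hK)
    rw [hminR p']
    apply Finset.le_inf'
    intro j hj
    obtain ⟨hj1, hjK⟩ := Finset.mem_Icc.mp hj
    by_cases hjB : j ≤ B
    · exact le_of_eq (heq j hj1 hjB).symm
    · exact le_of_lt (hlt j (not_le.mp hjB) hjK)
  -- B ≤ B'
  have hBB' : B ≤ B' := by
    by_contra hcon
    push_neg at hcon
    apply hfirst B' hB'1 hcon
    refine ⟨ps, hpsG, ?_, ?_, hmax'⟩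
    · intro i hi1 hiB'
      have : i ∈ {i | 1 ≤ i ∧ i ≤ B'} := ⟨hi1, hiB'⟩
      rw [← hset] at this
      rw [this.2.2, h1mem]
    · intro j hjB' hjK
      have hj1 : 1 ≤ j := le_trans hB'1 (le_of_lt hjB')
      have hjne : R j ps ≠ minR ps := by
        intro habs
        have : j ∈ {i | 1 ≤ i ∧ i ≤ K ∧ R i ps = minR ps} := ⟨hj1, hjK, habs⟩
        rw [hset] at this
        exact absurd this.2 (not_le.mpr hjB')
      have := hinf_le ps j hj1 hjK
      rw [h1mem]
      exact lt_of_le_of_ne this (Ne.symm hjne)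
  -- conclude
  intro p hp
  have hRps : R 1 ps ≤ R 1 p' := by
    apply hmax ps hpsG
    intro i hi1 hiB
    have : i ∈ {i | 1 ≤ i ∧ i ≤ B'} := ⟨hi1, le_trans hiB hBB'⟩
    rw [← hset] at this
    rw [this.2.2, h1mem]
  calc minR p ≤ minR ps := hpsmax p hp
    _ = R 1 ps := h1mem.symm
    _ ≤ R 1 p' := hRps
    _ = minR p' := hminp'.symm
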